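/- arXiv:1203.6429 — 4 statements merged into one kernel-verified Lean document; each statement's English description precedes it below -/
import Mathlib

section
/- Let S = P1···P_{d+1} be a simplex in R^d, let P be a point, and let P_i' be the reflection of P across the affine hyperplane spanned by the facet of S opposite P_i, for i = 1,...,d+1. Suppose Q is a point equidistant from P_1',...,P_{d+1}' (so Q = Iso_S(P), the isogonal conjugate of P). Let Q_i' be the reflection of Q across the facet opposite P_i. Then P is equidistant from Q_1',...,Q_{d+1}'; that is, isogonal conjugation is an involution: Iso_S(Iso_S(P)) = P. -/
/-- A point `p'` is the orthogonal reflection of `p` across the affine subspace `s`. -/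
def IsReflection {d : ℕ} (s : AffineSubspace ℝ (EuclideanSpace ℝ (Fin d)))
    (p p' : EuclideanSpace ℝ (Fin d)) : Prop :=
  midpoint ℝ p p' ∈ s ∧ p' -ᵥ p ∈ s.directionᗮ

open EuclideanGeometry in
lemma IsReflection.eq_reflection {d : ℕ} {s : AffineSubspace ℝ (EuclideanSpace ℝ (Fin d))}
    [Nonempty s] [s.direction.HasOrthogonalProjection]
    {p p' : EuclideanSpace ℝ (Fin d)} (h : IsReflection s p p') :
    p' = EuclideanGeometry.reflection s p := by
  obtain ⟨hm, hv⟩ := h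
  have hmk : midpoint ℝ p p' ∈ (s : Set (EuclideanSpace ℝ (Fin d))) ∩
      AffineSubspace.mk' p s.directionᗮ := by
    refine ⟨hm, ?_⟩
    show _ ∈ AffineSubspace.mk' p s.directionᗮ
    rw [AffineSubspace.mem_mk']
    have : midpoint ℝ p p' -ᵥ p = (1/2 : ℝ) • (p' -ᵥ p) := by
      rw [midpoint_vsub_left]
      norm_num
    rw [this]
    exact Submodule.smul_mem _ _ hv
  rw [inter_eq_singleton_orthogonalProjection p] at hmk
  rw [Set.mem_singleton_iff] at hmk
  rw [EuclideanGeometry.reflection_apply', ← hmk]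
  simp only [vsub_eq_sub, vadd_eq_add, midpoint_eq_smul_add, invOf_eq_inv]
  module

/-- Isogonal conjugation with respect to a simplex `S = P₁⋯P_{d+1}` in
`ℝ^d` is an involution: if `P'ᵢ` are the reflections of `P` in the facet hyperplanes
of `S`, `Q` is equidistant from the `P'ᵢ` (i.e. `Q = Iso_S(P)`), and `Q'ᵢ` are the
reflections of `Q` in the facet hyperplanes, then `P` is equidistant from the `Q'ᵢ`
(i.e. `Iso_S(Iso_S(P)) = P`). -/
theorem stmt_2 {d : ℕ} (hd : 1 ≤ d) (P : Fin (d + 1) → EuclideanSpace ℝ (Fin d))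
    (hP : AffineIndependent ℝ P)
    (p : EuclideanSpace ℝ (Fin d)) (hp : ∀ i, p ≠ P i)
    (P' : Fin (d + 1) → EuclideanSpace ℝ (Fin d))
    (hP' : ∀ i, IsReflection (affineSpan ℝ (P '' ({i}ᶜ : Set (Fin (d + 1))))) p (P' i))
    (Q : EuclideanSpace ℝ (Fin d)) (r : ℝ) (hQ : ∀ i, dist Q (P' i) = r)
    (Q' : Fin (d + 1) → EuclideanSpace ℝ (Fin d))
    (hQ' : ∀ i, IsReflection (affineSpan ℝ (P '' ({i}ᶜ : Set (Fin (d + 1))))) Q (Q' i)) :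
    ∃ r' : ℝ, ∀ i, dist p (Q' i) = r' := by
  refine ⟨r, fun i => ?_⟩
  set s := affineSpan ℝ (P '' ({i}ᶜ : Set (Fin (d + 1)))) with hs
  have hne : Nonempty s := by
    have : ∃ j : Fin (d + 1), j ≠ i := by
      have : 1 < Fintype.card (Fin (d + 1)) := by simp; omega
      exact Fintype.exists_ne_of_one_lt_card this i
    obtain ⟨j, hj⟩ := this
    exact ⟨⟨P j, subset_affineSpan ℝ _ ⟨j, hj, rfl⟩⟩⟩
  rw [(hQ' i).eq_reflection, ← hQ i, (hP' i).eq_reflection]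
  rw [dist_comm Q]
  exact EuclideanGeometry.dist_reflection s p Q
end

section
/- Let V1,...,Vn be n points in R^{n-2} such that every n-1 of them are affinely independent and they are not conhyperspherical. Let V_i^{(2)} be the circumcenter of {V_j : j ≠ i}. Then any n-1 of the points V_1^{(2)},...,V_n^{(2)} are affinely independent. -/
open Finset RealInnerProductSpace

/-- If every `n-1` of the points `V₁,...,Vₙ` in `ℝ^{n-2}` are affinely
independent and the points are not conhyperspherical, then any `n-1` of the
second-generation points `V_i^{(2)}` (circumcenters of the complementary `n-1`-point
subsets) are affinely independent. -/
theorem stmt_8 {n : ℕ} (V : Fin n → EuclideanSpace ℝ (Fin (n - 2)))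
    (hind : ∀ i : Fin n, AffineIndependent ℝ (fun j : {j : Fin n // j ≠ i} => V j))
    (hnoncon : ¬∃ (C : EuclideanSpace ℝ (Fin (n - 2))) (r : ℝ), ∀ i, dist C (V i) = r)
    (W : Fin n → EuclideanSpace ℝ (Fin (n - 2)))
    (hW : ∀ i, ∃ r : ℝ, ∀ j, j ≠ i → dist (W i) (V j) = r) :
    ∀ i : Fin n, AffineIndependent ℝ (fun j : {j : Fin n // j ≠ i} => W j) := by
  intro i
  rcases lt_or_ge n 2 with hn | hn
  · haveI : Subsingleton {j : Fin n // j ≠ i} := by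
      constructor
      intro a b
      have h1 : (a : Fin n).val < n := (a : Fin n).isLt
      have h2 : (b : Fin n).val < n := (b : Fin n).isLt
      have hi : (i : Fin n).val < n := i.isLt
      have ha' : (a : Fin n).val ≠ i.val := fun h => a.2 (Fin.ext h)
      have hb' : (b : Fin n).val ≠ i.val := fun h => b.2 (Fin.ext h)
      ext
      omega
    exact affineIndependent_of_subsingleton ℝ _
  · choose r hr using hW
    have hrnn : ∀ m : Fin n, 0 ≤ r m := by
      intro m
      have h0 : (0 : ℕ) < n := by omega
      have h1 : (1 : ℕ) < n := by omega
      by_cases hm : m = ⟨0, h0⟩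
      · have : (⟨1, h1⟩ : Fin n) ≠ m := by subst hm; simp [Fin.ext_iff]
        rw [← hr m _ this]; exact dist_nonneg
      · have : (⟨0, h0⟩ : Fin n) ≠ m := fun h => hm h.symm
        rw [← hr m _ this]; exact dist_nonneg
    set K : Fin n → ℝ := fun j => ‖W j‖ ^ 2 - (r j) ^ 2 with hK
    have hE : ∀ (j m : Fin n), m ≠ j → 2 * (inner ℝ (W j) (V m) : ℝ) - K j = ‖V m‖ ^ 2 := by
      intro j m hm
      have h2 : ‖W j - V m‖ = r j := by rw [← dist_eq_norm]; exact hr j m hm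
      have h3 : ‖W j - V m‖ ^ 2 = (r j) ^ 2 := by rw [h2]
      rw [norm_sub_sq_real] at h3
      simp only [hK]
      linarith
    have hδ : ∀ m : Fin n, m ≠ i → 2 * (inner ℝ (W m) (V m) : ℝ) - K m ≠ ‖V m‖ ^ 2 := by
      intro m _ hcon
      apply hnoncon
      refine ⟨W m, r m, fun j => ?_⟩
      by_cases hj : j = m
      · subst hj
        have h3 : ‖W j - V j‖ ^ 2 = (r j) ^ 2 := by
          rw [norm_sub_sq_real]
          simp only [hK] at hcon
          linarith
        have hd : 0 ≤ ‖W j - V j‖ := norm_nonneg _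
        have hfac : (‖W j - V j‖ - r j) * (‖W j - V j‖ + r j) = 0 := by
          linear_combination h3
        rw [dist_eq_norm]
        rcases mul_eq_zero.mp hfac with h | h
        · linarith
        · have := hrnn j
          linarith
      · exact hr m j hj
    rw [affineIndependent_iff]
    intro s w hw0 hws e he
    have hg : ∀ m : Fin n,
        ∑ e' ∈ s, w e' * (2 * (inner ℝ (W e'.val) (V m) : ℝ) - K e'.val)
          = - ∑ e' ∈ s, w e' * K e'.val := by
      intro m
      have h1 : ∑ e' ∈ s, w e' * (2 * (inner ℝ (W e'.val) (V m) : ℝ))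
          = 2 * (inner ℝ (∑ e' ∈ s, w e' • W e'.val) (V m) : ℝ) := by
        rw [sum_inner, Finset.mul_sum]
        refine Finset.sum_congr rfl fun e' _ => ?_
        rw [real_inner_smul_left]; ring
      have h2 : ∑ e' ∈ s, w e' * (2 * (inner ℝ (W e'.val) (V m) : ℝ) - K e'.val)
          = (∑ e' ∈ s, w e' * (2 * (inner ℝ (W e'.val) (V m) : ℝ))) - ∑ e' ∈ s, w e' * K e'.val := by
        rw [← Finset.sum_sub_distrib]
        exact Finset.sum_congr rfl fun e' _ => by ring
      rw [h2, h1, hws, inner_zero_left]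
      ring
    have hs0 : ∑ e' ∈ s, w e' * K e'.val = 0 := by
      have h := hg i
      have h2 : ∀ e' ∈ s, w e' * (2 * (inner ℝ (W e'.val) (V i) : ℝ) - K e'.val) = w e' * ‖V i‖ ^ 2 := by
        intro e' _
        rw [hE e'.val i (Ne.symm e'.2)]
      rw [Finset.sum_congr rfl h2, ← Finset.sum_mul, hw0, zero_mul] at h
      linarith
    have h := hg e.val
    have hsplit : ∀ e' ∈ s, w e' * (2 * (inner ℝ (W e'.val) (V e.val) : ℝ) - K e'.val)
        = w e' * ‖V e.val‖ ^ 2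
          + (if e' = e then w e' * (2 * (inner ℝ (W e.val) (V e.val) : ℝ) - K e.val - ‖V e.val‖ ^ 2) else 0) := by
      intro e' _
      by_cases h' : e' = e
      · subst h'
        rw [if_pos rfl]
        ring
      · have hne : (e.val : Fin n) ≠ e'.val := fun hh => h' (Subtype.ext hh.symm)
        rw [hE e'.val e.val hne, if_neg h', add_zero]
    rw [Finset.sum_congr rfl hsplit, Finset.sum_add_distrib, ← Finset.sum_mul, hw0, zero_mul,
      Finset.sum_ite_eq' s e, if_pos he, hs0, neg_zero, zero_add] at h
    have hδe := hδ e.val e.2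
    have : 2 * (inner ℝ (W e.val) (V e.val) : ℝ) - K e.val - ‖V e.val‖ ^ 2 ≠ 0 := fun hc => hδe (by linarith)
    exact (mul_eq_zero.mp h).resolve_right this
end

section
/- Let V1,...,Vn be points in R^{n-2} satisfying the nondegeneracy hypotheses, and suppose for each generation k the construction is defined. Then all odd-generation point sets N^{(1)}, N^{(3)}, N^{(5)}, ... are pairwise homothetic (there is a homothety or translation of R^{n-2} carrying V_i^{(2j+1)} to V_i^{(2l+1)} for all i), and similarly all even-generation sets N^{(2)}, N^{(4)}, ... are pairwise homothetic. -/
section PBC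

open Finset Module
variable {E : Type*} [NormedAddCommGroup E] [InnerProductSpace ℝ E] [FiniteDimensional ℝ E] {n : ℕ}

local notation "⟪" x ", " y "⟫" => @inner ℝ _ _ x y

set_option linter.unusedSectionVars false

lemma my_sum_subtype_ne {M : Type*} [AddCommGroup M] (i : Fin n) (f : Fin n → M) :
    ∑ j : {j : Fin n // j ≠ i}, f j = (∑ j, f j) - f i := by
  rw [eq_sub_iff_add_eq, ← Finset.sum_erase_add Finset.univ f (Finset.mem_univ i)]
  congr 1
  exact (Finset.sum_subtype _ (fun x => by simp [Finset.mem_erase]) f).symm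

lemma my_span_perp (hn : finrank ℝ E + 2 = n) (P : Fin n → E)
    (hind : ∀ i : Fin n, AffineIndependent ℝ (fun j : {j : Fin n // j ≠ i} => P j))
    (x : E) (hx : ∀ j l : Fin n, ⟪x, P j - P l⟫ = 0) : x = 0 := by
  have hn2 : 2 ≤ n := by omega
  set i0 : Fin n := ⟨0, by omega⟩
  have hcard : Fintype.card {j : Fin n // j ≠ i0} = finrank ℝ E + 1 := by
    simp [Fintype.card_subtype_compl]
    omega
  have htop := (hind i0).vectorSpan_eq_top_of_card_eq_finrank_add_one hcard
  have hx' : ∀ y ∈ vectorSpan ℝ (Set.range fun j : {j : Fin n // j ≠ i0} => P j), ⟪x, y⟫ = 0 := by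
    intro y hy
    rw [vectorSpan_def] at hy
    induction hy using Submodule.span_induction with
    | mem y hy =>
        obtain ⟨a, ha, b, hb, rfl⟩ := Set.mem_sub.mp hy
        obtain ⟨ja, rfl⟩ := ha
        obtain ⟨jb, rfl⟩ := hb
        exact hx _ _
    | zero => exact inner_zero_right x
    | add y z _ _ hy hz => rw [inner_add_right, hy, hz, add_zero]
    | smul c y _ hy => rw [real_inner_smul_right, hy, mul_zero]
  have : ⟪x, x⟫ = 0 := hx' x (htop ▸ Submodule.mem_top)
  exact inner_self_eq_zero.mp this

lemma my_weightedVSub_eq {ι : Type*} [Fintype ι] (w : ι → ℝ) (P : ι → E) (hw : ∑ i, w i = 0) :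
    Finset.univ.weightedVSub P w = ∑ i, w i • P i := by
  rw [Finset.weightedVSub_eq_weightedVSubOfPoint_of_sum_eq_zero _ w P hw (0 : E),
    Finset.weightedVSubOfPoint_apply]
  simp [vsub_eq_sub]

lemma my_exists_dep (hn : finrank ℝ E + 2 = n) (P : Fin n → E)
    (hind : ∀ i : Fin n, AffineIndependent ℝ (fun j : {j : Fin n // j ≠ i} => P j)) :
    ∃ a : Fin n → ℝ, (∀ i, a i ≠ 0) ∧ ∑ i, a i = 0 ∧ ∑ i, a i • P i = 0 := by
  have hnotind : ¬ AffineIndependent ℝ P := by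
    rw [← finrank_vectorSpan_le_iff_not_affineIndependent ℝ P
      (by simp [Fintype.card_fin]; omega : Fintype.card (Fin n) = finrank ℝ E + 2)]
    exact (Submodule.finrank_le _)
  rw [affineIndependent_iff_of_fintype] at hnotind
  push_neg at hnotind
  obtain ⟨w, hw0, hwv, i1, hwi1⟩ := hnotind
  have hsum : ∑ i, w i • P i = 0 := by rw [← my_weightedVSub_eq w P hw0]; exact hwv
  refine ⟨w, ?_, hw0, hsum⟩
  intro i
  intro hwi
  have hall : ∀ j : {j : Fin n // j ≠ i}, w j = 0 := by
    have := affineIndependent_iff_of_fintype (k := ℝ)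
      (fun j : {j : Fin n // j ≠ i} => P j) |>.mp (hind i)
    apply this (fun j => w j)
    · rw [my_sum_subtype_ne i w, hw0, hwi, sub_zero]
    · rw [my_weightedVSub_eq]
      · rw [my_sum_subtype_ne i (fun j => w j • P j), hsum, hwi, zero_smul, sub_zero]
      · rw [my_sum_subtype_ne i w, hw0, hwi, sub_zero]
  rcases eq_or_ne i1 i with rfl | hne
  · exact hwi1 hwi
  · exact hwi1 (hall ⟨i1, hne⟩)

lemma my_key (hn : 2 ≤ n) (X Y : Fin n → E)
    (h : ∀ i : Fin n, ∃ r : ℝ, ∀ j, j ≠ i → dist (Y i) (X j) = r) :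
    ∃ t s : Fin n → ℝ,
      (∀ i j, 2 * ⟪Y i, X j⟫ = ‖X j‖ ^ 2 + t i + (if j = i then s i else 0)) ∧
      (∀ i, s i = 0 → ∃ C r, ∀ j, dist C (X j) = r) := by
  choose r hr using h
  refine ⟨fun i => ‖Y i‖ ^ 2 - r i ^ 2,
    fun i => 2 * ⟪Y i, X i⟫ - ‖X i‖ ^ 2 - (‖Y i‖ ^ 2 - r i ^ 2), fun i j => ?_, fun i hs => ?_⟩
  · rcases eq_or_ne j i with rfl | hj
    · simp only [eq_self_iff_true, if_true]; ring
    · rw [if_neg hj, add_zero]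
      have hd := hr i j hj
      have : ‖Y i - X j‖ ^ 2 = r i ^ 2 := by rw [← hd, dist_eq_norm]
      rw [norm_sub_sq_real] at this
      dsimp only
      linarith
  · refine ⟨Y i, r i, fun j => ?_⟩
    rcases eq_or_ne j i with rfl | hj
    · have hsq : dist (Y j) (X j) ^ 2 = r j ^ 2 := by
        rw [dist_eq_norm, norm_sub_sq_real]
        dsimp only at hs
        nlinarith [hs]
      obtain ⟨j0, hj0⟩ := Fintype.exists_ne_of_one_lt_card (by rw [Fintype.card_fin]; omega) j
      have hr0 : 0 ≤ r j := (hr j j0 hj0) ▸ dist_nonneg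
      rcases sq_eq_sq_iff_eq_or_eq_neg.mp hsq with h | h
      · exact h
      · have := dist_nonneg (x := Y j) (y := X j); linarith
    · exact hr i j hj

lemma my_rel (a t s : Fin n → ℝ) (X Y : Fin n → E) (ha0 : ∑ i, a i = 0)
    (haX : ∑ i, a i • X i = 0)
    (hkey : ∀ i j, 2 * ⟪Y i, X j⟫ = ‖X j‖ ^ 2 + t i + (if j = i then s i else 0))
    (i : Fin n) : a i * s i = -(∑ j, a j * ‖X j‖ ^ 2) := by
  have h1 : (2 : ℝ) * ⟪Y i, ∑ j, a j • X j⟫ = 0 := by rw [haX, inner_zero_right, mul_zero]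
  rw [inner_sum] at h1
  simp only [real_inner_smul_right] at h1
  have h2 : ∑ j, a j * (2 * ⟪Y i, X j⟫) = 0 := by
    rw [← h1, Finset.mul_sum]
    exact Finset.sum_congr rfl fun j _ => by ring
  have h3 : ∑ j, a j * (2 * ⟪Y i, X j⟫)
      = (∑ j, a j * ‖X j‖ ^ 2) + (∑ j, a j) * t i + a i * s i := by
    have : ∀ j : Fin n, a j * (2 * ⟪Y i, X j⟫)
        = a j * ‖X j‖ ^ 2 + a j * t i + (if j = i then a j * s j else 0) := by
      intro j
      rw [hkey i j]
      rcases eq_or_ne j i with rfl | hj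
      · simp only [eq_self_iff_true, if_true]; ring
      · simp only [if_neg hj]; ring
    rw [Finset.sum_congr rfl fun j _ => this j]
    rw [Finset.sum_add_distrib, Finset.sum_add_distrib, Finset.sum_ite_eq' Finset.univ i
      (fun j => a j * s j)]
    simp [Finset.sum_mul]
  rw [h2] at h3
  rw [ha0] at h3
  linarith

lemma my_two_step (hn : finrank ℝ E + 2 = n) (P Q R : Fin n → E)
    (hPQ : ∀ i : Fin n, ∃ r : ℝ, ∀ j, j ≠ i → dist (Q i) (P j) = r)
    (hQR : ∀ i : Fin n, ∃ r : ℝ, ∀ j, j ≠ i → dist (R i) (Q j) = r)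
    (hindP : ∀ i : Fin n, AffineIndependent ℝ (fun j : {j : Fin n // j ≠ i} => P j))
    (hindQ : ∀ i : Fin n, AffineIndependent ℝ (fun j : {j : Fin n // j ≠ i} => Q j))
    (hnP : ¬∃ (C : E) (r : ℝ), ∀ i, dist C (P i) = r)
    (hnQ : ¬∃ (C : E) (r : ℝ), ∀ i, dist C (Q i) = r) :
    ∃ (k : ℝ) (v : E), k ≠ 0 ∧ ∀ i, R i = k • P i + v := by
  have hn2 : 2 ≤ n := by omega
  have i0 : Fin n := ⟨0, by omega⟩
  obtain ⟨t, s, hkey, hcyc⟩ := my_key hn2 P Q hPQ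
  obtain ⟨t', s', hkey', hcyc'⟩ := my_key hn2 Q R hQR
  obtain ⟨a, ha, ha0, haP⟩ := my_exists_dep hn P hindP
  set β := ∑ j, a j * ‖P j‖ ^ 2 with hβdef
  have hrel : ∀ i, a i * s i = -β := my_rel a t s P Q ha0 haP hkey
  have hβ : β ≠ 0 := by
    intro h
    apply hnP
    apply hcyc i0
    have := hrel i0
    rw [h, neg_zero] at this
    exact (mul_eq_zero.mp this).resolve_left (ha i0)
  -- ∑ a_j • Q_j = 0
  have haQ : ∑ j, a j • Q j = 0 := by
    apply my_span_perp hn P hindP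
    have hconst : ∀ l, 2 * ⟪∑ j, a j • Q j, P l⟫ = (∑ j, a j * t j) - β := by
      intro l
      rw [sum_inner, Finset.mul_sum]
      have : ∀ j : Fin n, 2 * ⟪a j • Q j, P l⟫
          = a j * ‖P l‖ ^ 2 + a j * t j + (if l = j then a j * s j else 0) := by
        intro j
        rw [real_inner_smul_left]
        have := hkey j l
        rcases eq_or_ne l j with rfl | hlj
        · simp only [eq_self_iff_true, if_true] at this ⊢; linear_combination a l * this
        · simp only [if_neg hlj, add_zero] at this ⊢; linear_combination a j * this
      rw [Finset.sum_congr rfl fun j _ => this j, Finset.sum_add_distrib,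
        Finset.sum_add_distrib, Finset.sum_ite_eq Finset.univ l (fun j => a j * s j)]
      simp only [Finset.mem_univ, if_true, ← Finset.sum_mul, ha0, zero_mul, zero_add]
      rw [hrel l]
      ring
    intro j l
    rw [inner_sub_right]
    have h1 := hconst j
    have h2 := hconst l
    linarith
  set β' := ∑ j, a j * ‖Q j‖ ^ 2 with hβ'def
  have hrel' : ∀ i, a i * s' i = -β' := my_rel a t' s' Q R ha0 haQ hkey'
  have hβ' : β' ≠ 0 := by
    intro h
    apply hnQ
    apply hcyc' i0
    have := hrel' i0
    rw [h, neg_zero] at this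
    exact (mul_eq_zero.mp this).resolve_left (ha i0)
  set k := β' / β with hkdef
  have hδ : ∀ i, s' i - k * s i = 0 := by
    intro i
    have h1 := hrel i
    have h2 := hrel' i
    have h3 : a i * (s' i - k * s i) = (a i * s' i) - k * (a i * s i) := by ring
    rw [h1, h2] at h3
    have h4 : -β' - k * -β = 0 := by rw [hkdef]; field_simp; ring
    rw [h4] at h3
    exact (mul_eq_zero.mp h3).resolve_left (ha i)
  -- main inner product identity
  have h2w : ∀ i j, 2 * ⟪R i - k • P i, Q j⟫
      = (t' i - k * ‖P i‖ ^ 2) + (‖Q j‖ ^ 2 - k * t j) := by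
    intro i j
    rw [inner_sub_left, real_inner_smul_left]
    have e1 := hkey' i j
    have e2 : 2 * ⟪P i, Q j⟫ = ‖P i‖ ^ 2 + t j + (if i = j then s j else 0) := by
      rw [real_inner_comm]; exact hkey j i
    rcases eq_or_ne j i with rfl | hj
    · simp only [eq_self_iff_true, if_true] at e1 e2
      have hd := hδ j
      linear_combination e1 - k * e2 + hd
    · simp only [if_neg hj, if_neg (Ne.symm hj), add_zero] at e1 e2
      linear_combination e1 - k * e2
  refine ⟨k, R i0 - k • P i0, div_ne_zero hβ' hβ, fun i => ?_⟩
  have hw : (R i - k • P i) - (R i0 - k • P i0) = 0 := by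
    apply my_span_perp hn Q hindQ
    intro j l
    rw [inner_sub_left, inner_sub_right, inner_sub_right]
    have e1 := h2w i j
    have e2 := h2w i l
    have e3 := h2w i0 j
    have e4 := h2w i0 l
    linarith
  have := sub_eq_zero.mp hw
  rw [sub_eq_sub_iff_sub_eq_sub] at this
  rw [eq_sub_iff_add_eq] at this
  linear_combination (norm := module) this


section
variable {E : Type*} [NormedAddCommGroup E] [InnerProductSpace ℝ E] {n : ℕ}

def MyAux (X Y : Fin n → E) : Prop := ∃ (k : ℝ) (v : E), k ≠ 0 ∧ ∀ i, Y i = k • X i + v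

lemma myAux_refl (X : Fin n → E) : MyAux X X :=
  ⟨1, 0, one_ne_zero, fun i => by simp⟩

lemma myAux_symm {X Y : Fin n → E} (h : MyAux X Y) : MyAux Y X := by
  obtain ⟨k, v, hk, hY⟩ := h
  refine ⟨k⁻¹, -(k⁻¹ • v), inv_ne_zero hk, fun i => ?_⟩
  rw [hY i, smul_add, smul_smul, inv_mul_cancel₀ hk, one_smul]
  abel

lemma myAux_trans {X Y Z : Fin n → E} (h1 : MyAux X Y) (h2 : MyAux Y Z) : MyAux X Z := by
  obtain ⟨k1, v1, hk1, hY⟩ := h1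
  obtain ⟨k2, v2, hk2, hZ⟩ := h2
  refine ⟨k2 * k1, k2 • v1 + v2, mul_ne_zero hk2 hk1, fun i => ?_⟩
  rw [hZ i, hY i, smul_add, smul_smul]
  abel

end

end PBC

/-- Two labelled point configurations are homothetic: related by a central dilation
(with some center `c` and ratio `k ≠ 0`) or by a translation, uniformly in the
index. -/
def Homothetic {n d : ℕ} (X Y : Fin n → EuclideanSpace ℝ (Fin d)) : Prop :=
  (∃ (c : EuclideanSpace ℝ (Fin d)) (k : ℝ), k ≠ 0 ∧ ∀ i, Y i - c = k • (X i - c)) ∨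
    (∃ v : EuclideanSpace ℝ (Fin d), ∀ i, Y i = X i + v)

lemma myAux_to_hom {n d : ℕ} {X Y : Fin n → EuclideanSpace ℝ (Fin d)}
    (h : MyAux X Y) : Homothetic X Y := by
  obtain ⟨k, v, hk, hY⟩ := h
  by_cases hk1 : k = 1
  · right; exact ⟨v, fun i => by rw [hY i, hk1, one_smul]⟩
  · left
    have h1 : (1 : ℝ) - k ≠ 0 := sub_ne_zero.mpr (Ne.symm hk1)
    refine ⟨(1 - k)⁻¹ • v, k, hk, fun i => ?_⟩
    rw [hY i]
    match_scalars
    · ring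
    · field_simp; ring

/-- In the Perpendicular Bisector Construction in `ℝ^{n-2}` (all
generations defined and nondegenerate), all odd-generation point sets are pairwise
homothetic, and all even-generation point sets are pairwise homothetic.
(Here `V 0` is the first generation, so generations `2j` are odd-numbered
`N^(2j+1)` and generations `2j+1` are even-numbered `N^(2j+2)`.) -/
theorem stmt_12 {n : ℕ} (V : ℕ → Fin n → EuclideanSpace ℝ (Fin (n - 2)))
    (hstep : ∀ (k : ℕ) (i : Fin n), ∃ r : ℝ, ∀ j, j ≠ i → dist (V (k + 1) i) (V k j) = r)
    (hind : ∀ (k : ℕ) (i : Fin n),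
      AffineIndependent ℝ (fun j : {j : Fin n // j ≠ i} => V k j))
    (hnoncon : ∀ k : ℕ,
      ¬∃ (C : EuclideanSpace ℝ (Fin (n - 2))) (r : ℝ), ∀ i, dist C (V k i) = r) :
    (∀ j l : ℕ, Homothetic (V (2 * j)) (V (2 * l))) ∧
      (∀ j l : ℕ, Homothetic (V (2 * j + 1)) (V (2 * l + 1))) := by
  by_cases hn2 : n < 2
  · exfalso
    apply hnoncon 0
    refine ⟨0, 0, fun i => ?_⟩
    have hz : ∀ x : EuclideanSpace ℝ (Fin (n - 2)), x = 0 :=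
      fun x => by ext q; exact absurd q.2 (by omega)
    rw [hz (V 0 i), dist_self]
  · push_neg at hn2
    have hn : Module.finrank ℝ (EuclideanSpace ℝ (Fin (n - 2))) + 2 = n := by
      rw [finrank_euclideanSpace_fin]; omega
    have key : ∀ m : ℕ, MyAux (V m) (V (m + 2)) := fun m =>
      my_two_step hn (V m) (V (m + 1)) (V (m + 2)) (hstep m) (hstep (m + 1))
        (hind m) (hind (m + 1)) (hnoncon m) (hnoncon (m + 1))
    have chain : ∀ (m j : ℕ), MyAux (V m) (V (m + 2 * j)) := by
      intro m j
      induction j with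
      | zero => simpa using myAux_refl (V m)
      | succ j ih =>
          rw [show m + 2 * (j + 1) = m + 2 * j + 2 by ring]
          exact myAux_trans ih (key (m + 2 * j))
    constructor
    · intro j l
      have h1 := chain 0 j
      have h2 := chain 0 l
      rw [Nat.zero_add] at h1 h2
      exact myAux_to_hom (myAux_trans (myAux_symm h1) h2)
    · intro j l
      have h1 := chain 1 j
      have h2 := chain 1 l
      rw [Nat.add_comm 1 (2*j)] at h1
      rw [Nat.add_comm 1 (2*l)] at h2
      exact myAux_to_hom (myAux_trans (myAux_symm h1) h2)
end

section
/- Under the assumptions of the Perpendicular Bisector Construction in R^{n-2} (all generations defined and nondegenerate), the center of homothety of any pair of odd-generation polytopes P^{(2i+1)}, P^{(2j+1)} coincides with the center of homothety of any pair of even-generation polytopes P^{(2k)}, P^{(2l)} — there is a single point W about which every pair of same-parity generations is homothetic. -/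
open scoped RealInnerProductSpace

/-- A point equidistant from an affinely spanning family is unique. -/
lemma circ_unique {E : Type*} [NormedAddCommGroup E] [InnerProductSpace ℝ E]
    {ι : Type*} (S : ι → E) (hspan : affineSpan ℝ (Set.range S) = ⊤)
    {p q : E} {r1 r2 : ℝ} (hp : ∀ i, dist p (S i) = r1) (hq : ∀ i, dist q (S i) = r2) :
    p = q := by
  have key : ∀ i, ⟪p - q, S i⟫ = (‖p‖ ^ 2 - ‖q‖ ^ 2 - r1 ^ 2 + r2 ^ 2) / 2 := by
    intro i
    have h1 : ‖p - S i‖ ^ 2 = r1 ^ 2 := by rw [← dist_eq_norm, hp i]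
    have h2 : ‖q - S i‖ ^ 2 = r2 ^ 2 := by rw [← dist_eq_norm, hq i]
    rw [norm_sub_sq_real] at h1 h2
    have : ⟪p - q, S i⟫ = ⟪p, S i⟫ - ⟪q, S i⟫ := by rw [inner_sub_left]
    rw [this]; nlinarith [h1, h2]
  have hgen : ∀ i j, ⟪p - q, S i - S j⟫ = 0 := by
    intro i j; rw [inner_sub_right, key i, key j]; ring
  have hvs : vectorSpan ℝ (Set.range S) = ⊤ := by
    rw [← direction_affineSpan, hspan, AffineSubspace.direction_top]
  have hmem : p - q ∈ vectorSpan ℝ (Set.range S) := hvs ▸ Submodule.mem_top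
  rw [vectorSpan_def] at hmem
  have key2 : ∀ x ∈ Submodule.span ℝ (Set.range S -ᵥ Set.range S), ⟪p - q, x⟫ = 0 := by
    intro x hx
    induction hx using Submodule.span_induction with
    | mem u hu =>
        obtain ⟨a, ha, b, hb, rfl⟩ := hu
        obtain ⟨i, rfl⟩ := ha
        obtain ⟨j, rfl⟩ := hb
        exact hgen i j
    | zero => exact inner_zero_right _
    | add x y _ _ hx hy => rw [inner_add_right, hx, hy, add_zero]
    | smul a x _ hx => rw [inner_smul_right, hx, mul_zero]
  exact sub_eq_zero.mp (inner_self_eq_zero (𝕜 := ℝ) |>.mp (key2 _ hmem))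

/-- In the Perpendicular Bisector Construction in `ℝ^{n-2}` (all
generations defined and nondegenerate), assuming every pair of same-parity
generations is related by a genuine homothety (ratio `≠ 0, 1`, so its center is a
well-defined unique point), there is a single point `W` about which every pair of
same-parity generations is homothetic: the center of homothety of any pair of
odd-generation polytopes coincides with that of any pair of even-generation
polytopes. -/
theorem stmt_13 {n : ℕ} (V : ℕ → Fin n → EuclideanSpace ℝ (Fin (n - 2)))
    (hstep : ∀ (k : ℕ) (i : Fin n), ∃ r : ℝ, ∀ j, j ≠ i → dist (V (k + 1) i) (V k j) = r)
    (hind : ∀ (k : ℕ) (i : Fin n),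
      AffineIndependent ℝ (fun j : {j : Fin n // j ≠ i} => V k j))
    (hnoncon : ∀ k : ℕ,
      ¬∃ (C : EuclideanSpace ℝ (Fin (n - 2))) (r : ℝ), ∀ i, dist C (V k i) = r)
    (hhom : ∀ a b : ℕ, a % 2 = b % 2 → a ≠ b →
      ∃ (c : EuclideanSpace ℝ (Fin (n - 2))) (k : ℝ), k ≠ 0 ∧ k ≠ 1 ∧
        ∀ i, V b i - c = k • (V a i - c)) :
    ∃ W : EuclideanSpace ℝ (Fin (n - 2)), ∀ a b : ℕ, a % 2 = b % 2 →
      ∃ k : ℝ, k ≠ 0 ∧ ∀ i, V b i - W = k • (V a i - W) := by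
  -- trivial case: ambient space is a point
  by_cases hn : n ≤ 2
  · refine ⟨0, fun a b _ => ⟨1, one_ne_zero, fun i => ?_⟩⟩
    have h0 : n - 2 = 0 := by omega
    have : Subsingleton (EuclideanSpace ℝ (Fin (n - 2))) := by
      rw [h0]; infer_instance
    exact Subsingleton.elim _ _
  push_neg at hn
  -- the affine span of each `n-1`-point subfamily is everything
  have hspan : ∀ (k : ℕ) (i : Fin n),
      affineSpan ℝ (Set.range fun j : {j : Fin n // j ≠ i} => V k j) = ⊤ := by
    intro k i
    rw [(hind k i).affineSpan_eq_top_iff_card_eq_finrank_add_one]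
    rw [finrank_euclideanSpace_fin]
    rw [Fintype.card_subtype_compl]
    simp [Fintype.card_fin]
    omega
  obtain ⟨c, k, hk0, hk1, hck⟩ := hhom 0 2 rfl (by norm_num)
  -- equivariance: the homothety (c, k) commutes with the construction step
  have equiv : ∀ a b : ℕ, (∀ i, V b i - c = k • (V a i - c)) →
      ∀ i, V (b + 1) i - c = k • (V (a + 1) i - c) := by
    intro a b hab i
    obtain ⟨r, hr⟩ := hstep a i
    obtain ⟨r', hr'⟩ := hstep b i
    have himg : ∀ j : {j : Fin n // j ≠ i},
        dist (c + k • (V (a + 1) i - c)) (V b j) = |k| * r := by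
      intro j
      have hb : (V b j : EuclideanSpace ℝ (Fin (n - 2))) = c + k • (V a j - c) := by
        have := hab j
        rw [sub_eq_iff_eq_add] at this
        rw [this]; abel
      rw [hb, dist_eq_norm]
      have : c + k • (V (a+1) i - c) - (c + k • (V a j - c))
          = k • (V (a+1) i - V a j) := by
        module
      rw [this, norm_smul, Real.norm_eq_abs, ← dist_eq_norm, hr j j.2]
    have huniq : V (b + 1) i = c + k • (V (a + 1) i - c) :=
      circ_unique (fun j : {j : Fin n // j ≠ i} => V b j) (hspan b i)
        (fun j => hr' j j.2) himg
    rw [huniq]; abel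
  -- all consecutive same-parity steps share the center c and ratio k
  have step2 : ∀ m : ℕ, ∀ i, V (m + 2) i - c = k • (V m i - c) := by
    intro m
    induction m with
    | zero => exact hck
    | succ m ih => exact equiv m (m + 2) ih
  -- iterate
  have iter : ∀ t m : ℕ, ∀ i, V (m + 2 * t) i - c = k ^ t • (V m i - c) := by
    intro t
    induction t with
    | zero => intro m i; simp
    | succ t ih =>
        intro m i
        have h1 : m + 2 * (t + 1) = (m + 2 * t) + 2 := by ring
        rw [h1, step2 (m + 2 * t) i, ih m i, smul_smul, pow_succ]
        ring_nf
  refine ⟨c, fun a b hab => ?_⟩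
  rcases le_total a b with h | h
  · obtain ⟨t, rfl⟩ : ∃ t, b = a + 2 * t := ⟨(b - a) / 2, by omega⟩
    exact ⟨k ^ t, pow_ne_zero t hk0, iter t a⟩
  · obtain ⟨t, rfl⟩ : ∃ t, a = b + 2 * t := ⟨(a - b) / 2, by omega⟩
    refine ⟨(k ^ t)⁻¹, inv_ne_zero (pow_ne_zero t hk0), fun i => ?_⟩
    rw [iter t b i, inv_smul_smul₀ (pow_ne_zero t hk0)]
end
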